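/- Let q > 3 and let f : ℝ³ → [0,∞) be measurable with ‖f‖_q := sup_{v∈ℝ³} (1+|v|)^q f(v) < ∞ and ρ_f > 0. Then there exists a constant C_q > 0, depending only on q, such that ρ_f ≤ C_q ‖f‖_q T_f^{3/2}. -/

import Mathlib

open MeasureTheory Real

abbrev E3 := EuclideanSpace ℝ (Fin 3)

/-- for q > 3 there is a constant C_q, depending only on q, with
ρ_f ≤ C_q ‖f‖_q T_f^{3/2}.  The weighted norm ‖f‖_q is encoded through an
arbitrary upper bound N of v ↦ (1+|v|)^q f(v). -/
theorem lem_temp_i (q : ℝ) (hq : 3 < q) :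
    ∃ C : ℝ, 0 < C ∧
      ∀ (f : E3 → ℝ), Measurable f → (∀ v, 0 ≤ f v) →
        Integrable f →
        ∀ N : ℝ, (∀ v, (1 + ‖v‖) ^ q * f v ≤ N) →
        ∀ (ρf : ℝ) (Uf : E3) (Tf : ℝ),
          ρf = ∫ v, f v →
          Integrable (fun v => f v • v) →
          Uf = ρf⁻¹ • ∫ v, f v • v →
          Integrable (fun v => ‖v - Uf‖ ^ 2 * f v) →
          Tf = (3 * ρf)⁻¹ * ∫ v, ‖v - Uf‖ ^ 2 * f v →
          0 < ρf →
          ρf ≤ C * N * Tf ^ ((3 : ℝ) / 2) := by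
  set c : ℝ := (volume (Metric.ball (0:E3) 1)).toReal with hc
  have hcpos : 0 < c :=
    ENNReal.toReal_pos (Metric.measure_ball_pos _ _ one_pos).ne' measure_ball_lt_top.ne
  refine ⟨2 * c * 6 ^ ((3:ℝ)/2),
    mul_pos (mul_pos two_pos hcpos) (Real.rpow_pos_of_pos (by norm_num) _), ?_⟩
  intro f hfm hfnn hfint N hN ρf Uf Tf hρ hint1 hU hint2 hT hρpos
  have hN0 : 0 ≤ N := le_trans (mul_nonneg (Real.rpow_nonneg (by positivity) q) (hfnn 0)) (hN 0)
  set I : ℝ := ∫ v, ‖v - Uf‖ ^ 2 * f v with hI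
  have hInn : 0 ≤ I := integral_nonneg fun v => mul_nonneg (sq_nonneg _) (hfnn v)
  -- pointwise bound f ≤ N
  have hfN : ∀ v, f v ≤ N := by
    intro v
    have h1 : (1:ℝ) ≤ (1 + ‖v‖) ^ q :=
      Real.one_le_rpow (by linarith [norm_nonneg v]) (by linarith)
    calc f v = 1 * f v := (one_mul _).symm
      _ ≤ (1 + ‖v‖) ^ q * f v := mul_le_mul_of_nonneg_right h1 (hfnn v)
      _ ≤ N := hN v
  -- the key splitting estimate
  have key : ∀ R : ℝ, 0 < R → ρf ≤ N * c * R ^ 3 + R⁻¹ ^ 2 * I := by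
    intro R hR
    have hs : MeasurableSet (Metric.ball Uf R) := measurableSet_ball
    have hsplit : (∫ v in Metric.ball Uf R, f v) + ∫ v in (Metric.ball Uf R)ᶜ, f v = ∫ v, f v :=
      integral_add_compl hs hfint
    have hvol : (volume (Metric.ball Uf R)).toReal = R ^ 3 * c := by
      rw [Measure.addHaar_ball volume Uf hR.le, ENNReal.toReal_mul,
        ENNReal.toReal_ofReal (by positivity : (0:ℝ) ≤ R ^ Module.finrank ℝ E3)]
      simp [hc]
    have h1 : ∫ v in Metric.ball Uf R, f v ≤ N * c * R ^ 3 := by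
      calc ∫ v in Metric.ball Uf R, f v ≤ ∫ _ in Metric.ball Uf R, N := by
            apply setIntegral_mono_on hfint.integrableOn
              (integrableOn_const measure_ball_lt_top.ne) hs
            intro v _; exact hfN v
        _ = (volume (Metric.ball Uf R)).toReal • N := setIntegral_const N
        _ = N * c * R ^ 3 := by rw [hvol]; simp [smul_eq_mul]; ring
    have h2 : ∫ v in (Metric.ball Uf R)ᶜ, f v ≤ R⁻¹ ^ 2 * I := by
      have hmono : ∫ v in (Metric.ball Uf R)ᶜ, f v
          ≤ ∫ v in (Metric.ball Uf R)ᶜ, R⁻¹ ^ 2 * (‖v - Uf‖ ^ 2 * f v) := by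
        apply setIntegral_mono_on hfint.integrableOn
          ((hint2.const_mul _).integrableOn) hs.compl
        intro v hv
        have hdist : R ≤ ‖v - Uf‖ := by
          simp only [Set.mem_compl_iff, Metric.mem_ball, not_lt, dist_eq_norm] at hv
          exact hv
        have h3 : f v * R ^ 2 ≤ ‖v - Uf‖ ^ 2 * f v := by
          nlinarith [mul_nonneg (hfnn v) (mul_nonneg (sub_nonneg.2 hdist)
            (by linarith [norm_nonneg (v - Uf)] : (0:ℝ) ≤ ‖v - Uf‖ + R))]
        calc f v = R⁻¹ ^ 2 * (f v * R ^ 2) := by field_simp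
          _ ≤ R⁻¹ ^ 2 * (‖v - Uf‖ ^ 2 * f v) :=
            mul_le_mul_of_nonneg_left h3 (by positivity)
      calc ∫ v in (Metric.ball Uf R)ᶜ, f v
          ≤ ∫ v in (Metric.ball Uf R)ᶜ, R⁻¹ ^ 2 * (‖v - Uf‖ ^ 2 * f v) := hmono
        _ = R⁻¹ ^ 2 * ∫ v in (Metric.ball Uf R)ᶜ, ‖v - Uf‖ ^ 2 * f v := by
            rw [integral_const_mul]
        _ ≤ R⁻¹ ^ 2 * I := by
            refine mul_le_mul_of_nonneg_left ?_ (sq_nonneg _)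
            exact setIntegral_le_integral hint2
              (Filter.Eventually.of_forall fun v => mul_nonneg (sq_nonneg _) (hfnn v))
    calc ρf = (∫ v in Metric.ball Uf R, f v) + ∫ v in (Metric.ball Uf R)ᶜ, f v := by
          rw [hsplit, hρ]
      _ ≤ N * c * R ^ 3 + R⁻¹ ^ 2 * I := add_le_add h1 h2
  -- positivity of I
  have hIpos : 0 < I := by
    rcases hInn.lt_or_eq with h | h
    · exact h
    · exfalso
      have hzero : (fun v => ‖v - Uf‖ ^ 2 * f v) =ᵐ[volume] 0 :=
        (integral_eq_zero_iff_of_nonneg (fun v => mul_nonneg (sq_nonneg _) (hfnn v)) hint2).1 h.symm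
      have hne : ∀ᵐ v : E3, v ≠ Uf := by
        rw [ae_iff]
        have : {v : E3 | ¬ v ≠ Uf} = {Uf} := by ext v; simp
        rw [this]
        exact measure_singleton _
      have hf0 : f =ᵐ[volume] 0 := by
        filter_upwards [hzero, hne] with v h1 h2
        have hnv : ‖v - Uf‖ ≠ 0 := by
          simp only [norm_ne_zero_iff, sub_ne_zero]; exact h2
        have := h1
        simp only [Pi.zero_apply] at this ⊢
        have hsq : ‖v - Uf‖ ^ 2 ≠ 0 := pow_ne_zero _ hnv
        exact (mul_eq_zero.1 this).resolve_left hsq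
      have : ρf = 0 := by rw [hρ, integral_congr_ae hf0]; simp
      linarith
  have hTf : 0 < Tf := by
    rw [hT]
    have : (0:ℝ) < (3 * ρf)⁻¹ := by positivity
    exact mul_pos this hIpos
  have hI3 : I = 3 * ρf * Tf := by
    rw [hT]; field_simp
  -- choose R = sqrt (6 Tf)
  set R : ℝ := Real.sqrt (6 * Tf) with hRdef
  have hRpos : 0 < R := Real.sqrt_pos.2 (by positivity)
  have hR2 : R ^ 2 = 6 * Tf := Real.sq_sqrt (by positivity)
  have hkey := key R hRpos
  have hRinv : R⁻¹ ^ 2 * I = ρf / 2 := by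
    rw [inv_pow, hR2, hI3]
    field_simp
    ring
  have hR3 : R ^ 3 = 6 ^ ((3:ℝ)/2) * Tf ^ ((3:ℝ)/2) := by
    have h0 : (0:ℝ) ≤ 6 * Tf := by positivity
    calc R ^ 3 = ((6 * Tf) ^ ((1:ℝ)/2)) ^ (3:ℕ) := by rw [hRdef, Real.sqrt_eq_rpow]
      _ = (6 * Tf) ^ ((1/2 : ℝ) * 3) := by
          rw [← Real.rpow_natCast ((6 * Tf) ^ ((1:ℝ)/2)) 3, ← Real.rpow_mul h0]
          norm_num
      _ = (6 * Tf) ^ ((3:ℝ)/2) := by norm_num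
      _ = 6 ^ ((3:ℝ)/2) * Tf ^ ((3:ℝ)/2) := Real.mul_rpow (by norm_num) hTf.le
  rw [hRinv] at hkey
  calc ρf = 2 * (ρf - ρf / 2) := by ring
    _ ≤ 2 * (N * c * R ^ 3) := by linarith
    _ = 2 * c * 6 ^ ((3:ℝ)/2) * N * Tf ^ ((3:ℝ)/2) := by rw [hR3]; ring
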